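/- For every y = (y₁,y₂;y₃,y₄) ∈ ℚ_p^{2×2} one has σ(p·y₂)·σ(p·y₄)·Σ_{a ∈ ℤ_p/p²ℤ_p} σ(p^{−1}(y₁+a·y₂))·σ(p^{−1}(y₃+a·y₄)) = [−1,−1,−1,−1](y)·σ(det y) + p·[0,0,0,0](y)·σ(p^{−1}·det y) − [−1,0,−1,0](y)·σ(det y) + p²·[1,1,1,1](y) − p·[0,1,0,1](y). -/

import Mathlib

noncomputable section
open scoped Classical

/-- The characteristic function σ of ℤ_p inside ℚ_p: `σ(x) = 1` if `x ∈ ℤ_p`, else 0. -/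
def pind {p : ℕ} [Fact p.Prime] (x : ℚ_[p]) : ℝ := if ‖x‖ ≤ 1 then 1 else 0

/-- `[i₁,i₂,i₃,i₄](y) = σ(p^{−i₁}y₁)·σ(p^{−i₂}y₂)·σ(p^{−i₃}y₃)·σ(p^{−i₄}y₄)`. -/
def brk {p : ℕ} [Fact p.Prime] (i₁ i₂ i₃ i₄ : ℤ) (y₁ y₂ y₃ y₄ : ℚ_[p]) : ℝ :=
  pind ((p : ℚ_[p]) ^ (-i₁) * y₁) * pind ((p : ℚ_[p]) ^ (-i₂) * y₂)
    * pind ((p : ℚ_[p]) ^ (-i₃) * y₃) * pind ((p : ℚ_[p]) ^ (-i₄) * y₄)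

namespace Stmt13Aux

variable {p : ℕ} [hp : Fact p.Prime]

lemma pR_pos : (0:ℝ) < p := by exact_mod_cast hp.out.pos
lemma one_lt_pR : (1:ℝ) < p := by exact_mod_cast hp.out.one_lt
lemma pinv_lt_one : (p:ℝ)⁻¹ < 1 := by
  rw [inv_lt_one_iff₀]; right; exact one_lt_pR
lemma pinv_le_one : (p:ℝ)⁻¹ ≤ 1 := le_of_lt pinv_lt_one
lemma one_le_pR : (1:ℝ) ≤ p := le_of_lt one_lt_pR

lemma pind_one {x : ℚ_[p]} (h : ‖x‖ ≤ 1) : pind x = 1 := if_pos h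
lemma pind_zero {x : ℚ_[p]} (h : ¬ ‖x‖ ≤ 1) : pind x = 0 := if_neg h
lemma pind_neg (x : ℚ_[p]) : pind (-x) = pind x := by simp [pind]

lemma norm_pinv_mul (x : ℚ_[p]) : ‖(p:ℚ_[p])⁻¹ * x‖ = (p:ℝ) * ‖x‖ := by
  rw [norm_mul, norm_inv, Padic.norm_p, inv_inv]

lemma norm_pmul (x : ℚ_[p]) : ‖(p:ℚ_[p]) * x‖ = (p:ℝ)⁻¹ * ‖x‖ := by
  rw [norm_mul, Padic.norm_p]

lemma pind_pinv (x : ℚ_[p]) :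
    pind ((p:ℚ_[p])⁻¹ * x) = if ‖x‖ ≤ (p:ℝ)⁻¹ then (1:ℝ) else 0 := by
  unfold pind
  congr 1
  rw [norm_pinv_mul, eq_iff_iff, ← le_div_iff₀' pR_pos, one_div]

lemma pind_pm (x : ℚ_[p]) :
    pind ((p:ℚ_[p]) * x) = if ‖x‖ ≤ (p:ℝ) then (1:ℝ) else 0 := by
  unfold pind
  congr 1
  rw [norm_pmul, eq_iff_iff, inv_mul_le_iff₀ pR_pos, mul_one]

lemma nadd {a b : ℚ_[p]} {t : ℝ} (ha : ‖a‖ ≤ t) (hb : ‖b‖ ≤ t) : ‖a + b‖ ≤ t :=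
  le_trans (Padic.nonarchimedean a b) (max_le ha hb)

lemma shift_iff {a b : ℚ_[p]} {t : ℝ} (hb : ‖b‖ ≤ t) : ‖a + b‖ ≤ t ↔ ‖a‖ ≤ t := by
  constructor
  · intro h
    have : ‖(a+b) + (-b)‖ ≤ t := nadd h (by simpa using hb)
    simpa using this
  · intro h; exact nadd h hb

lemma dom {a b : ℚ_[p]} (h : ‖b‖ < ‖a‖) : ‖a + b‖ = ‖a‖ := by
  rw [Padic.add_eq_max_of_ne (ne_of_gt h)]
  exact max_eq_left h.le

lemma eq_one_norm {x : ℚ_[p]} (h1 : ¬ ‖x‖ ≤ (p:ℝ)⁻¹) (h2 : ‖x‖ ≤ 1) : ‖x‖ = 1 := by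
  have hiff := Padic.norm_le_pow_iff_norm_lt_pow_add_one x (-1)
  rw [zpow_neg_one] at hiff
  norm_num at hiff
  exact le_antisymm h2 (not_lt.mp (fun hlt => h1 (hiff.mpr hlt)))

lemma eq_p_norm {x : ℚ_[p]} (h1 : ¬ ‖x‖ ≤ 1) (h2 : ‖x‖ ≤ (p:ℝ)) : ‖x‖ = p := by
  have hiff := Padic.norm_le_pow_iff_norm_lt_pow_add_one x 0
  norm_num at hiff
  exact le_antisymm h2 (not_lt.mp (fun hlt => h1 (hiff.mpr hlt)))

lemma nat_norm_le (a : ℕ) : ‖((a:ℚ_[p]))‖ ≤ 1 := by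
  have := Padic.norm_int_le_one (p := p) (a : ℤ)
  push_cast at this
  exact this


lemma block (m : ℕ) (hm : 0 < m) (r : ℤ) :
    ∑ x ∈ Finset.range m, (if (m:ℤ) ∣ ((x:ℤ) - r) then (1:ℝ) else 0) = 1 := by
  have hm' : (m:ℤ) ≠ 0 := by exact_mod_cast hm.ne'
  have h0 : 0 ≤ r % m := Int.emod_nonneg r hm'
  have hlt : r % m < m := Int.emod_lt_of_pos r (by exact_mod_cast hm)
  set x0 : ℕ := (r % m).toNat with hx0def
  have hx0 : (x0:ℤ) = r % m := Int.toNat_of_nonneg h0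
  have hdvd0 : (m:ℤ) ∣ ((x0:ℤ) - r) := by
    rw [hx0, Int.emod_def]
    exact ⟨-(r / m), by ring⟩
  have hx0m : x0 < m := by omega
  rw [Finset.sum_eq_single x0]
  · rw [if_pos hdvd0]
  · intro b hb hne
    rw [if_neg]
    intro hdvd
    have hd2 : (m:ℤ) ∣ ((b:ℤ) - (x0:ℤ)) := by
      have := dvd_sub hdvd hdvd0
      simpa using this
    have hb' : b < m := Finset.mem_range.mp hb
    have : ((b:ℤ) - (x0:ℤ)) = 0 := Int.eq_zero_of_abs_lt_dvd hd2 (by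
      rw [abs_lt]; omega)
    omega
  · intro hnot
    exact absurd (Finset.mem_range.mpr hx0m) hnot

lemma sum_indicator_dvd (m n : ℕ) (hm : 0 < m) (r : ℤ) :
    ∑ a ∈ Finset.range (m*n), (if (m:ℤ) ∣ ((a:ℤ) - r) then (1:ℝ) else 0) = n := by
  induction n with
  | zero => simp
  | succ n ih =>
      rw [Nat.mul_succ, Finset.sum_range_add, ih]
      have he : ∀ x : ℕ, ((m*n + x : ℕ):ℤ) - r = (x:ℤ) - (r - m*n) := by
        intro x; push_cast; ring
      have : ∑ x ∈ Finset.range m,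
          (if (m:ℤ) ∣ ((m*n + x : ℕ):ℤ) - r then (1:ℝ) else 0) = 1 := by
        rw [Finset.sum_congr rfl (fun x _ => by rw [he x])]
        exact block m hm (r - m*n)
      rw [this]; push_cast; ring

lemma approx (z : ℚ_[p]) (hz : ‖z‖ ≤ 1) (n : ℕ) :
    ∃ r : ℕ, r < p^n ∧ ‖z - (r:ℚ_[p])‖ ≤ (p:ℝ)^(-(n:ℤ)) := by
  set w : ℤ_[p] := ⟨z, hz⟩ with hw
  refine ⟨w.appr n, w.appr_lt n, ?_⟩
  have h1 := ((w - (w.appr n : ℤ_[p])).norm_le_pow_iff_mem_span_pow n).mpr (w.appr_spec n)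
  rw [PadicInt.norm_def] at h1
  have h2 : ((w - (w.appr n : ℤ_[p]) : ℤ_[p]) : ℚ_[p]) = z - (w.appr n : ℚ_[p]) := by
    push_cast [hw]
    rfl
  rwa [h2] at h1

lemma key_iff (n : ℕ) (c u z : ℚ_[p]) (hu0 : u ≠ 0) (r : ℕ)
    (hz : u * z = -c) (hr : ‖z - (r:ℚ_[p])‖ ≤ (p:ℝ)^(-(n:ℤ))) (a : ℕ) :
    ‖c + (a:ℚ_[p])*u‖ ≤ ‖u‖ * (p:ℝ)^(-(n:ℤ)) ↔ ((p:ℤ)^n ∣ ((a:ℤ) - (r:ℤ))) := by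
  have h1 : c + (a:ℚ_[p])*u = u * ((a:ℚ_[p]) - z) := by
    rw [mul_sub, hz]; ring
  rw [h1, norm_mul, mul_le_mul_iff_right₀ (norm_pos_iff.mpr hu0)]
  have h2 : (a:ℚ_[p]) - z = ((a:ℚ_[p]) - (r:ℚ_[p])) + ((r:ℚ_[p]) - z) := by ring
  rw [h2, shift_iff (by rwa [norm_sub_rev] at hr)]
  have h3 : ((a:ℚ_[p]) - (r:ℚ_[p])) = (((a:ℤ) - (r:ℤ) : ℤ) : ℚ_[p]) := by push_cast; ring
  rw [h3, Padic.norm_int_le_pow_iff_dvd]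

lemma get_r (n : ℕ) (c u : ℚ_[p]) (hu0 : u ≠ 0) (hcu : ‖c‖ ≤ ‖u‖) :
    ∃ (z : ℚ_[p]) (r : ℕ), u * z = -c ∧ r < p^n ∧ ‖z - (r:ℚ_[p])‖ ≤ (p:ℝ)^(-(n:ℤ)) := by
  have hzle : ‖-c * u⁻¹‖ ≤ 1 := by
    rw [norm_mul, norm_neg, norm_inv]
    rw [← div_eq_mul_inv, div_le_one (norm_pos_iff.mpr hu0)]
    exact hcu
  obtain ⟨r, hr1, hr2⟩ := approx (-c * u⁻¹) hzle n
  exact ⟨-c * u⁻¹, r, by field_simp, hr1, hr2⟩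


omit hp in
lemma pth1 : (p:ℝ)^(-((1:ℕ):ℤ)) = (p:ℝ)⁻¹ := by
  rw [zpow_neg, zpow_natCast, pow_one]

lemma pth2 : (p:ℝ) * (p:ℝ)^(-((2:ℕ):ℤ)) = (p:ℝ)⁻¹ := by
  have h0 : (p:ℝ) ≠ 0 := ne_of_gt pR_pos
  rw [zpow_neg, zpow_natCast, pow_two]
  field_simp

lemma term_unit (c u z : ℚ_[p]) (hu : ‖u‖ = 1) (r : ℕ) (hz : u*z = -c)
    (hr : ‖z - (r:ℚ_[p])‖ ≤ (p:ℝ)^(-((1:ℕ):ℤ))) (a : ℕ) :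
    pind ((p:ℚ_[p])⁻¹ * (c + (a:ℚ_[p])*u)) = if (p:ℤ) ∣ ((a:ℤ) - (r:ℤ)) then (1:ℝ) else 0 := by
  have hu0 : u ≠ 0 := by
    intro h; rw [h, norm_zero] at hu; norm_num at hu
  have hiff := key_iff 1 c u z hu0 r hz hr a
  rw [hu, one_mul, pth1, pow_one] at hiff
  rw [pind_pinv]
  exact if_congr hiff rfl rfl

lemma term_p (c u z : ℚ_[p]) (hu : ‖u‖ = (p:ℝ)) (r : ℕ) (hz : u*z = -c)
    (hr : ‖z - (r:ℚ_[p])‖ ≤ (p:ℝ)^(-((2:ℕ):ℤ))) (hrlt : r < p^2) (a : ℕ) (ha : a < p^2) :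
    pind ((p:ℚ_[p])⁻¹ * (c + (a:ℚ_[p])*u)) = if a = r then (1:ℝ) else 0 := by
  have hu0 : u ≠ 0 := by
    intro h; rw [h, norm_zero] at hu
    exact absurd hu (ne_of_lt pR_pos)
  have hiff := key_iff 2 c u z hu0 r hz hr a
  rw [hu, pth2] at hiff
  rw [pind_pinv]
  refine if_congr (hiff.trans ?_) rfl rfl
  have hq : ((p^2 : ℕ):ℤ) = (p:ℤ)^2 := by push_cast; ring
  constructor
  · intro h
    have h0 : ((a:ℤ) - (r:ℤ)) = 0 := Int.eq_zero_of_abs_lt_dvd h (by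
      rw [abs_lt, ← hq]; omega)
    omega
  · intro h; rw [h]; simp

lemma term_small (c u : ℚ_[p]) (hu : ‖u‖ ≤ (p:ℝ)⁻¹) (a : ℕ) :
    pind ((p:ℚ_[p])⁻¹ * (c + (a:ℚ_[p])*u)) = pind ((p:ℚ_[p])⁻¹ * c) := by
  rw [pind_pinv, pind_pinv]
  refine if_congr ?_ rfl rfl
  exact shift_iff (by
    rw [norm_mul]
    calc ‖(a:ℚ_[p])‖ * ‖u‖ ≤ 1 * (p:ℝ)⁻¹ :=
      mul_le_mul (nat_norm_le a) hu (norm_nonneg u) zero_le_one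
    _ = (p:ℝ)⁻¹ := one_mul _)

lemma term_zero_of_big {c : ℚ_[p]} (u : ℚ_[p]) {t : ℝ} (hu : ‖u‖ ≤ t)
    (hc : ¬ ‖c‖ ≤ t) (ht : (p:ℝ)⁻¹ ≤ t) (a : ℕ) :
    pind ((p:ℚ_[p])⁻¹ * (c + (a:ℚ_[p])*u)) = 0 := by
  rw [pind_pinv, if_neg]
  intro hle
  have h1 : ‖(a:ℚ_[p])*u‖ < ‖c‖ := by
    rw [norm_mul]
    calc ‖(a:ℚ_[p])‖ * ‖u‖ ≤ 1 * t :=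
      mul_le_mul (nat_norm_le a) hu (norm_nonneg u) zero_le_one
    _ = t := one_mul _
    _ < ‖c‖ := not_le.mp hc
  rw [dom h1] at hle
  exact hc (le_trans hle ht)

lemma sum_unit (c u : ℚ_[p]) (hu : ‖u‖ = 1) :
    ∑ a ∈ Finset.range (p^2), pind ((p:ℚ_[p])⁻¹ * (c + (a:ℚ_[p])*u))
      = (p:ℝ) * pind c := by
  by_cases hc : ‖c‖ ≤ 1
  · have hu0 : u ≠ 0 := by intro h; rw [h, norm_zero] at hu; norm_num at hu
    obtain ⟨z, r, hz, hrlt, hr⟩ := get_r 1 c u hu0 (by rw [hu]; exact hc)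
    rw [Finset.sum_congr rfl (fun a _ => term_unit c u z hu r hz hr a)]
    rw [pow_two, sum_indicator_dvd p p hp.out.pos r, pind_one hc, mul_one]
  · rw [pind_zero hc, mul_zero]
    exact Finset.sum_eq_zero (fun a _ =>
      term_zero_of_big u (le_of_eq hu) hc pinv_le_one a)

lemma sum_pnorm (c u : ℚ_[p]) (hu : ‖u‖ = (p:ℝ)) :
    ∑ a ∈ Finset.range (p^2), pind ((p:ℚ_[p])⁻¹ * (c + (a:ℚ_[p])*u))
      = pind ((p:ℚ_[p]) * c) := by
  by_cases hc : ‖c‖ ≤ (p:ℝ)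
  · have hu0 : u ≠ 0 := by
      intro h; rw [h, norm_zero] at hu; exact absurd hu (ne_of_lt pR_pos)
    obtain ⟨z, r, hz, hrlt, hr⟩ := get_r 2 c u hu0 (by rw [hu]; exact hc)
    rw [Finset.sum_congr rfl (fun a ha =>
      term_p c u z hu r hz hr hrlt a (Finset.mem_range.mp ha))]
    rw [Finset.sum_ite_eq' (Finset.range (p^2)) r (fun _ => (1:ℝ)),
      if_pos (Finset.mem_range.mpr hrlt), pind_pm, if_pos hc]
  · rw [pind_pm, if_neg hc]
    exact Finset.sum_eq_zero (fun a _ =>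
      term_zero_of_big u (le_of_eq hu) hc (le_trans pinv_le_one one_le_pR) a)


lemma det_norm (y₁ y₂ y₃ y₄ z₁ z₂ : ℚ_[p]) (e1 : y₂*z₁ = -y₁) (e2 : y₄*z₂ = -y₃) :
    ‖y₁*y₄ - y₂*y₃‖ = ‖y₂‖*‖y₄‖*‖z₁ - z₂‖ := by
  have h : y₁*y₄ - y₂*y₃ = y₂*y₄*(z₂ - z₁) := by linear_combination y₄*e1 - y₂*e2
  rw [h, norm_mul, norm_mul, norm_sub_rev]

lemma rdvd_iff (n : ℕ) (z₁ z₂ : ℚ_[p]) (r₁ r₂ : ℕ)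
    (h1 : ‖z₁ - (r₁:ℚ_[p])‖ ≤ (p:ℝ)^(-(n:ℤ))) (h2 : ‖z₂ - (r₂:ℚ_[p])‖ ≤ (p:ℝ)^(-(n:ℤ))) :
    (‖z₁ - z₂‖ ≤ (p:ℝ)^(-(n:ℤ)) ↔ (p:ℤ)^n ∣ ((r₁:ℤ) - (r₂:ℤ))) := by
  have hsplit : z₁ - z₂ = (((r₁:ℤ) - (r₂:ℤ) : ℤ):ℚ_[p]) + ((z₁ - (r₁:ℚ_[p])) + ((r₂:ℚ_[p]) - z₂)) := by
    push_cast; ring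
  rw [hsplit, shift_iff (nadd h1 (by rwa [norm_sub_rev] at h2)),
    Padic.norm_int_le_pow_iff_dvd]

lemma hr21 {z : ℚ_[p]} {r : ℕ} (h : ‖z - (r:ℚ_[p])‖ ≤ (p:ℝ)^(-((2:ℕ):ℤ))) :
    ‖z - (r:ℚ_[p])‖ ≤ (p:ℝ)^(-((1:ℕ):ℤ)) :=
  le_trans h (zpow_le_zpow_right₀ one_le_pR (by norm_num))

lemma sum_uu (y₁ y₂ y₃ y₄ : ℚ_[p]) (h2 : ‖y₂‖ = 1) (h4 : ‖y₄‖ = 1) :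
    (∑ a ∈ Finset.range (p^2),
      pind ((p:ℚ_[p])⁻¹*(y₁ + (a:ℚ_[p])*y₂)) * pind ((p:ℚ_[p])⁻¹*(y₃+(a:ℚ_[p])*y₄)))
    = (p:ℝ) * (pind y₁ * (pind y₃ * pind ((p:ℚ_[p])⁻¹ * (y₁*y₄ - y₂*y₃)))) := by
  by_cases hc1 : ‖y₁‖ ≤ 1
  swap
  · rw [pind_zero hc1, Finset.sum_eq_zero (fun a _ => by
      rw [term_zero_of_big y₂ (le_of_eq h2) hc1 pinv_le_one a, zero_mul])]
    ring
  by_cases hc3 : ‖y₃‖ ≤ 1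
  swap
  · rw [pind_zero hc3, Finset.sum_eq_zero (fun a _ => by
      rw [term_zero_of_big y₄ (le_of_eq h4) hc3 pinv_le_one a, mul_zero])]
    ring
  have hu2 : y₂ ≠ 0 := fun h => by rw [h, norm_zero] at h2; norm_num at h2
  have hu4 : y₄ ≠ 0 := fun h => by rw [h, norm_zero] at h4; norm_num at h4
  obtain ⟨z₁, r₁, hz1, hrlt1, hr1⟩ := get_r 1 y₁ y₂ hu2 (by rw [h2]; exact hc1)
  obtain ⟨z₂, r₂, hz2, hrlt2, hr2⟩ := get_r 1 y₃ y₄ hu4 (by rw [h4]; exact hc3)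
  have hdetn : ‖y₁*y₄ - y₂*y₃‖ = ‖z₁ - z₂‖ := by
    rw [det_norm y₁ y₂ y₃ y₄ z₁ z₂ hz1 hz2, h2, h4]; ring
  have hdet : pind ((p:ℚ_[p])⁻¹ * (y₁*y₄ - y₂*y₃))
      = if (p:ℤ) ∣ ((r₁:ℤ) - (r₂:ℤ)) then (1:ℝ) else 0 := by
    rw [pind_pinv]
    refine if_congr ?_ rfl rfl
    rw [hdetn, ← pth1, rdvd_iff 1 z₁ z₂ r₁ r₂ hr1 hr2, pow_one]
  rw [Finset.sum_congr rfl (fun a _ => by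
    rw [term_unit y₁ y₂ z₁ h2 r₁ hz1 hr1 a, term_unit y₃ y₄ z₂ h4 r₂ hz2 hr2 a])]
  rw [pind_one hc1, pind_one hc3, hdet]
  by_cases hd : (p:ℤ) ∣ ((r₁:ℤ) - (r₂:ℤ))
  · rw [if_pos hd]
    have congr2 : ∀ a ∈ Finset.range (p^2),
        (if (p:ℤ) ∣ ((a:ℤ)-(r₁:ℤ)) then (1:ℝ) else 0)
          * (if (p:ℤ) ∣ ((a:ℤ)-(r₂:ℤ)) then (1:ℝ) else 0)
        = (if (p:ℤ) ∣ ((a:ℤ)-(r₁:ℤ)) then (1:ℝ) else 0) := by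
      intro a _
      by_cases h : (p:ℤ) ∣ ((a:ℤ)-(r₁:ℤ))
      · have h' : (p:ℤ) ∣ ((a:ℤ)-(r₂:ℤ)) := by
          have hsum := dvd_add h hd
          have e : (a:ℤ)-(r₁:ℤ) + ((r₁:ℤ)-(r₂:ℤ)) = (a:ℤ)-(r₂:ℤ) := by ring
          rwa [e] at hsum
        rw [if_pos h, if_pos h', mul_one]
      · rw [if_neg h, zero_mul]
    rw [Finset.sum_congr rfl congr2, pow_two, sum_indicator_dvd p p hp.out.pos (r₁:ℤ)]
    ring
  · rw [if_neg hd]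
    have hz : ∀ a ∈ Finset.range (p^2),
        (if (p:ℤ) ∣ ((a:ℤ)-(r₁:ℤ)) then (1:ℝ) else 0)
          * (if (p:ℤ) ∣ ((a:ℤ)-(r₂:ℤ)) then (1:ℝ) else 0) = 0 := by
      intro a _
      by_cases h : (p:ℤ) ∣ ((a:ℤ)-(r₁:ℤ))
      · have h' : ¬ (p:ℤ) ∣ ((a:ℤ)-(r₂:ℤ)) := by
          intro h''
          apply hd
          have hsub := dvd_sub h'' h
          have e : (a:ℤ)-(r₂:ℤ) - ((a:ℤ)-(r₁:ℤ)) = (r₁:ℤ)-(r₂:ℤ) := by ring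
          rwa [e] at hsub
        rw [if_neg h', mul_zero]
      · rw [if_neg h, zero_mul]
    rw [Finset.sum_eq_zero hz]
    ring

lemma sum_pu (y₁ y₂ y₃ y₄ : ℚ_[p]) (h2 : ‖y₂‖ = (p:ℝ)) (h4 : ‖y₄‖ = 1) :
    (∑ a ∈ Finset.range (p^2),
      pind ((p:ℚ_[p])⁻¹*(y₁ + (a:ℚ_[p])*y₂)) * pind ((p:ℚ_[p])⁻¹*(y₃+(a:ℚ_[p])*y₄)))
    = pind ((p:ℚ_[p])*y₁) * (pind y₃ * pind (y₁*y₄ - y₂*y₃)) := by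
  by_cases hc1 : ‖y₁‖ ≤ (p:ℝ)
  swap
  · rw [pind_pm, if_neg hc1, Finset.sum_eq_zero (fun a _ => by
      rw [term_zero_of_big y₂ (le_of_eq h2) hc1 (le_trans pinv_le_one one_le_pR) a, zero_mul])]
    ring
  by_cases hc3 : ‖y₃‖ ≤ 1
  swap
  · rw [pind_zero hc3, Finset.sum_eq_zero (fun a _ => by
      rw [term_zero_of_big y₄ (le_of_eq h4) hc3 pinv_le_one a, mul_zero])]
    ring
  have hu2 : y₂ ≠ 0 := fun h => by
    rw [h, norm_zero] at h2; exact absurd h2 (ne_of_lt pR_pos)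
  have hu4 : y₄ ≠ 0 := fun h => by rw [h, norm_zero] at h4; norm_num at h4
  obtain ⟨z₁, r₁, hz1, hrlt1, hr1⟩ := get_r 2 y₁ y₂ hu2 (by rw [h2]; exact hc1)
  obtain ⟨z₂, r₂, hz2, hrlt2, hr2⟩ := get_r 1 y₃ y₄ hu4 (by rw [h4]; exact hc3)
  have hdetn : ‖y₁*y₄ - y₂*y₃‖ = (p:ℝ) * ‖z₁ - z₂‖ := by
    rw [det_norm y₁ y₂ y₃ y₄ z₁ z₂ hz1 hz2, h2, h4]; ring
  have hdet : pind (y₁*y₄ - y₂*y₃)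
      = if (p:ℤ) ∣ ((r₁:ℤ) - (r₂:ℤ)) then (1:ℝ) else 0 := by
    unfold pind
    refine if_congr ?_ rfl rfl
    rw [hdetn]
    have e1 : (p:ℝ) * ‖z₁ - z₂‖ ≤ 1 ↔ ‖z₁ - z₂‖ ≤ (p:ℝ)⁻¹ := by
      rw [← le_div_iff₀' pR_pos, one_div]
    rw [e1, ← pth1, rdvd_iff 1 z₁ z₂ r₁ r₂ (hr21 hr1) hr2, pow_one]
  rw [Finset.sum_congr rfl (fun a ha => by
    rw [term_p y₁ y₂ z₁ h2 r₁ hz1 hr1 hrlt1 a (Finset.mem_range.mp ha),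
      term_unit y₃ y₄ z₂ h4 r₂ hz2 hr2 a])]
  have hsum : (∑ a ∈ Finset.range (p^2),
      (if a = r₁ then (1:ℝ) else 0) * (if (p:ℤ) ∣ ((a:ℤ)-(r₂:ℤ)) then (1:ℝ) else 0))
      = if (p:ℤ) ∣ ((r₁:ℤ)-(r₂:ℤ)) then (1:ℝ) else 0 := by
    rw [Finset.sum_eq_single r₁]
    · rw [if_pos rfl, one_mul]
    · intro b _ hne; rw [if_neg hne, zero_mul]
    · intro habs; exact absurd (Finset.mem_range.mpr hrlt1) habs
  rw [hsum, pind_pm, if_pos hc1, pind_one hc3, hdet]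
  ring

lemma sum_pp (y₁ y₂ y₃ y₄ : ℚ_[p]) (h2 : ‖y₂‖ = (p:ℝ)) (h4 : ‖y₄‖ = (p:ℝ)) :
    (∑ a ∈ Finset.range (p^2),
      pind ((p:ℚ_[p])⁻¹*(y₁ + (a:ℚ_[p])*y₂)) * pind ((p:ℚ_[p])⁻¹*(y₃+(a:ℚ_[p])*y₄)))
    = pind ((p:ℚ_[p])*y₁) * (pind ((p:ℚ_[p])*y₃) * pind (y₁*y₄ - y₂*y₃)) := by
  by_cases hc1 : ‖y₁‖ ≤ (p:ℝ)
  swap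
  · rw [pind_pm, if_neg hc1, Finset.sum_eq_zero (fun a _ => by
      rw [term_zero_of_big y₂ (le_of_eq h2) hc1 (le_trans pinv_le_one one_le_pR) a, zero_mul])]
    ring
  by_cases hc3 : ‖y₃‖ ≤ (p:ℝ)
  swap
  · rw [pind_pm (p := p) y₃, if_neg hc3, Finset.sum_eq_zero (fun a _ => by
      rw [term_zero_of_big y₄ (le_of_eq h4) hc3 (le_trans pinv_le_one one_le_pR) a, mul_zero])]
    ring
  have hu2 : y₂ ≠ 0 := fun h => by
    rw [h, norm_zero] at h2; exact absurd h2 (ne_of_lt pR_pos)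
  have hu4 : y₄ ≠ 0 := fun h => by
    rw [h, norm_zero] at h4; exact absurd h4 (ne_of_lt pR_pos)
  obtain ⟨z₁, r₁, hz1, hrlt1, hr1⟩ := get_r 2 y₁ y₂ hu2 (by rw [h2]; exact hc1)
  obtain ⟨z₂, r₂, hz2, hrlt2, hr2⟩ := get_r 2 y₃ y₄ hu4 (by rw [h4]; exact hc3)
  have hdetn : ‖y₁*y₄ - y₂*y₃‖ = (p:ℝ) * (p:ℝ) * ‖z₁ - z₂‖ := by
    rw [det_norm y₁ y₂ y₃ y₄ z₁ z₂ hz1 hz2, h2, h4]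
  have hq : ((p^2 : ℕ):ℤ) = (p:ℤ)^2 := by push_cast; ring
  have hdet : pind (y₁*y₄ - y₂*y₃) = if r₁ = r₂ then (1:ℝ) else 0 := by
    unfold pind
    refine if_congr ?_ rfl rfl
    rw [hdetn]
    have e1 : (p:ℝ) * (p:ℝ) * ‖z₁ - z₂‖ ≤ 1 ↔ ‖z₁ - z₂‖ ≤ ((p:ℝ)*(p:ℝ))⁻¹ := by
      rw [← le_div_iff₀' (mul_pos pR_pos pR_pos), one_div]
    have e2 : ((p:ℝ)*(p:ℝ))⁻¹ = (p:ℝ)^(-((2:ℕ):ℤ)) := by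
      rw [zpow_neg, zpow_natCast, pow_two]
    rw [e1, e2, rdvd_iff 2 z₁ z₂ r₁ r₂ hr1 hr2]
    constructor
    · intro h
      have h0 : ((r₁:ℤ) - (r₂:ℤ)) = 0 := Int.eq_zero_of_abs_lt_dvd h (by
        rw [abs_lt, ← hq]; omega)
      omega
    · intro h; rw [h]; simp
  rw [Finset.sum_congr rfl (fun a ha => by
    rw [term_p y₁ y₂ z₁ h2 r₁ hz1 hr1 hrlt1 a (Finset.mem_range.mp ha),
      term_p y₃ y₄ z₂ h4 r₂ hz2 hr2 hrlt2 a (Finset.mem_range.mp ha)])]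
  have hsum : (∑ a ∈ Finset.range (p^2),
      (if a = r₁ then (1:ℝ) else 0) * (if a = r₂ then (1:ℝ) else 0))
      = if r₁ = r₂ then (1:ℝ) else 0 := by
    rw [Finset.sum_eq_single r₁]
    · rw [if_pos rfl, one_mul]
    · intro b _ hne; rw [if_neg hne, zero_mul]
    · intro habs; exact absurd (Finset.mem_range.mpr hrlt1) habs
  rw [hsum, pind_pm, if_pos hc1, pind_pm, if_pos hc3, hdet]
  ring


lemma sub_le {a b : ℚ_[p]} {t : ℝ} (ha : ‖a‖ ≤ t) (hb : ‖b‖ ≤ t) : ‖a - b‖ ≤ t := by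
  have h : a - b = a + (-b) := by ring
  rw [h]; exact nadd ha (by rwa [norm_neg])

lemma det_eq_right {a b : ℚ_[p]} (h : ‖a‖ < ‖b‖) : ‖a - b‖ = ‖b‖ := by
  have e : a - b = (-b) + a := by ring
  rw [e, dom (by rwa [norm_neg]), norm_neg]

lemma brk_m1 (y₁ y₂ y₃ y₄ : ℚ_[p]) : brk (-1) (-1) (-1) (-1) y₁ y₂ y₃ y₄ =
    pind ((p:ℚ_[p])*y₁) * pind ((p:ℚ_[p])*y₂) * pind ((p:ℚ_[p])*y₃) * pind ((p:ℚ_[p])*y₄) := by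
  norm_num [brk]

lemma brk_0 (y₁ y₂ y₃ y₄ : ℚ_[p]) : brk 0 0 0 0 y₁ y₂ y₃ y₄ =
    pind y₁ * pind y₂ * pind y₃ * pind y₄ := by
  norm_num [brk]

lemma brk_m10 (y₁ y₂ y₃ y₄ : ℚ_[p]) : brk (-1) 0 (-1) 0 y₁ y₂ y₃ y₄ =
    pind ((p:ℚ_[p])*y₁) * pind y₂ * pind ((p:ℚ_[p])*y₃) * pind y₄ := by
  norm_num [brk]

lemma brk_1 (y₁ y₂ y₃ y₄ : ℚ_[p]) : brk 1 1 1 1 y₁ y₂ y₃ y₄ =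
    pind ((p:ℚ_[p])⁻¹*y₁) * pind ((p:ℚ_[p])⁻¹*y₂) * pind ((p:ℚ_[p])⁻¹*y₃) * pind ((p:ℚ_[p])⁻¹*y₄) := by
  norm_num [brk, zpow_neg]

lemma brk_01 (y₁ y₂ y₃ y₄ : ℚ_[p]) : brk 0 1 0 1 y₁ y₂ y₃ y₄ =
    pind y₁ * pind ((p:ℚ_[p])⁻¹*y₂) * pind y₃ * pind ((p:ℚ_[p])⁻¹*y₄) := by
  norm_num [brk, zpow_neg]

lemma main (y₁ y₂ y₃ y₄ : ℚ_[p]) (hle : ‖y₄‖ ≤ ‖y₂‖) :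
    pind ((p : ℚ_[p]) * y₂) * pind ((p : ℚ_[p]) * y₄) *
        ∑ a ∈ Finset.range (p ^ 2),
          pind ((p : ℚ_[p])⁻¹ * (y₁ + (a : ℚ_[p]) * y₂))
            * pind ((p : ℚ_[p])⁻¹ * (y₃ + (a : ℚ_[p]) * y₄))
      = brk (-1) (-1) (-1) (-1) y₁ y₂ y₃ y₄ * pind (y₁ * y₄ - y₂ * y₃)
          + (p : ℝ) * brk 0 0 0 0 y₁ y₂ y₃ y₄ * pind ((p : ℚ_[p])⁻¹ * (y₁ * y₄ - y₂ * y₃))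
          - brk (-1) 0 (-1) 0 y₁ y₂ y₃ y₄ * pind (y₁ * y₄ - y₂ * y₃)
          + (p : ℝ) ^ 2 * brk 1 1 1 1 y₁ y₂ y₃ y₄
          - (p : ℝ) * brk 0 1 0 1 y₁ y₂ y₃ y₄ := by
  rw [brk_m1, brk_0, brk_m10, brk_1, brk_01]
  by_cases h2p : ‖y₂‖ ≤ (p:ℝ)
  swap
  · have h21 : ¬ ‖y₂‖ ≤ 1 := fun h => h2p (le_trans h one_le_pR)
    have h2i : ¬ ‖y₂‖ ≤ (p:ℝ)⁻¹ := fun h => h21 (le_trans h pinv_le_one)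
    rw [pind_pm y₂, if_neg h2p, pind_zero h21, pind_pinv y₂, if_neg h2i]
    ring
  have h4p : ‖y₄‖ ≤ (p:ℝ) := le_trans hle h2p
  rw [pind_pm y₂, if_pos h2p, pind_pm y₄, if_pos h4p]
  by_cases h21 : ‖y₂‖ ≤ 1
  · by_cases h2i : ‖y₂‖ ≤ (p:ℝ)⁻¹
    · -- case A : both ≤ p⁻¹
      have h4i : ‖y₄‖ ≤ (p:ℝ)⁻¹ := le_trans hle h2i
      have h41 : ‖y₄‖ ≤ 1 := le_trans h4i pinv_le_one
      rw [Finset.sum_congr rfl (fun a _ => by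
        rw [term_small y₁ y₂ h2i a, term_small y₃ y₄ h4i a])]
      rw [Finset.sum_const, Finset.card_range, nsmul_eq_mul]
      rw [pind_one h21, pind_one h41, pind_pinv y₂, if_pos h2i, pind_pinv y₄, if_pos h4i]
      have hc : pind y₁ * pind y₃ * pind ((p:ℚ_[p])⁻¹*(y₁*y₄ - y₂*y₃))
          = pind y₁ * pind y₃ := by
        by_cases hy1 : ‖y₁‖ ≤ 1
        swap
        · rw [pind_zero hy1]; ring
        by_cases hy3 : ‖y₃‖ ≤ 1
        swap
        · rw [pind_zero hy3]; ring
        have hd : ‖y₁*y₄ - y₂*y₃‖ ≤ (p:ℝ)⁻¹ := by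
          apply sub_le
          · rw [norm_mul]
            calc ‖y₁‖ * ‖y₄‖ ≤ 1 * (p:ℝ)⁻¹ :=
              mul_le_mul hy1 h4i (norm_nonneg _) zero_le_one
            _ = (p:ℝ)⁻¹ := one_mul _
          · rw [norm_mul]
            calc ‖y₂‖ * ‖y₃‖ ≤ (p:ℝ)⁻¹ * 1 :=
              mul_le_mul h2i hy3 (norm_nonneg _) (le_of_lt (inv_pos.mpr pR_pos))
            _ = (p:ℝ)⁻¹ := mul_one _
        rw [pind_pinv, if_pos hd, mul_one]
      push_cast
      linear_combination (-(p:ℝ)) * hc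
    · -- ‖y₂‖ = 1
      have h2u : ‖y₂‖ = 1 := eq_one_norm h2i h21
      by_cases h4i : ‖y₄‖ ≤ (p:ℝ)⁻¹
      · -- case B1 : unit, small
        rw [Finset.sum_congr rfl (fun a _ => by rw [term_small y₃ y₄ h4i a]),
          ← Finset.sum_mul, sum_unit y₁ y₂ h2u]
        have h41 : ‖y₄‖ ≤ 1 := le_trans h4i pinv_le_one
        rw [pind_one h21, pind_one h41, pind_pinv y₂, if_neg h2i, pind_pinv y₄, if_pos h4i]
        have hk : pind y₁ * pind ((p:ℚ_[p])⁻¹*y₃)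
            = pind y₁ * (pind y₃ * pind ((p:ℚ_[p])⁻¹*(y₁*y₄-y₂*y₃))) := by
          by_cases hy1 : ‖y₁‖ ≤ 1
          swap
          · rw [pind_zero hy1]; ring
          have h14 : ‖y₁*y₄‖ ≤ (p:ℝ)⁻¹ := by
            rw [norm_mul]
            calc ‖y₁‖ * ‖y₄‖ ≤ 1 * (p:ℝ)⁻¹ :=
              mul_le_mul hy1 h4i (norm_nonneg _) zero_le_one
            _ = (p:ℝ)⁻¹ := one_mul _
          by_cases hy3 : ‖y₃‖ ≤ (p:ℝ)⁻¹
          · have hd : ‖y₁*y₄ - y₂*y₃‖ ≤ (p:ℝ)⁻¹ := by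
              apply sub_le h14
              rw [norm_mul, h2u, one_mul]; exact hy3
            rw [pind_pinv y₃, if_pos hy3, pind_one (le_trans hy3 pinv_le_one),
              pind_pinv, if_pos hd]
            ring
          · rw [pind_pinv y₃, if_neg hy3]
            by_cases hy31 : ‖y₃‖ ≤ 1
            swap
            · rw [pind_zero hy31]; ring
            have h23 : ‖y₂*y₃‖ = 1 := by
              rw [norm_mul, h2u, one_mul, eq_one_norm hy3 hy31]
            have hdn : ‖y₁*y₄ - y₂*y₃‖ = 1 := by
              rw [det_eq_right (by rw [h23]; exact lt_of_le_of_lt h14 pinv_lt_one), h23]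
            have : ¬ ‖y₁*y₄ - y₂*y₃‖ ≤ (p:ℝ)⁻¹ := by
              rw [hdn]; exact not_le.mpr pinv_lt_one
            rw [pind_pinv, if_neg this]; ring
        push_cast
        linear_combination (p:ℝ) * hk
      · -- case B2 : both units
        have h41 : ‖y₄‖ ≤ 1 := le_trans hle h21
        have h4u : ‖y₄‖ = 1 := eq_one_norm h4i h41
        rw [sum_uu y₁ y₂ y₃ y₄ h2u h4u]
        rw [pind_one h21, pind_one h41, pind_pinv y₂, if_neg h2i, pind_pinv y₄, if_neg h4i]
        ring
  · -- ‖y₂‖ = p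
    have h2P : ‖y₂‖ = (p:ℝ) := eq_p_norm h21 h2p
    have h2i : ¬ ‖y₂‖ ≤ (p:ℝ)⁻¹ := fun h => h21 (le_trans h pinv_le_one)
    rw [pind_zero h21, pind_pinv y₂, if_neg h2i]
    by_cases h41 : ‖y₄‖ ≤ 1
    · by_cases h4i : ‖y₄‖ ≤ (p:ℝ)⁻¹
      · -- case C1
        rw [Finset.sum_congr rfl (fun a _ => by rw [term_small y₃ y₄ h4i a]),
          ← Finset.sum_mul, sum_pnorm y₁ y₂ h2P]
        rw [pind_one h41, pind_pinv y₄, if_pos h4i]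
        have hk : pind ((p:ℚ_[p])*y₁) * pind ((p:ℚ_[p])⁻¹*y₃)
            = pind ((p:ℚ_[p])*y₁) * (pind ((p:ℚ_[p])*y₃) * pind (y₁*y₄-y₂*y₃)) := by
          by_cases hy1 : ‖y₁‖ ≤ (p:ℝ)
          swap
          · rw [pind_pm y₁, if_neg hy1]; ring
          have h14 : ‖y₁*y₄‖ ≤ 1 := by
            rw [norm_mul]
            calc ‖y₁‖ * ‖y₄‖ ≤ (p:ℝ) * (p:ℝ)⁻¹ :=
              mul_le_mul hy1 h4i (norm_nonneg _) (le_of_lt pR_pos)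
            _ = 1 := mul_inv_cancel₀ (ne_of_gt pR_pos)
          by_cases hy3 : ‖y₃‖ ≤ (p:ℝ)⁻¹
          · have hd : ‖y₁*y₄ - y₂*y₃‖ ≤ 1 := by
              apply sub_le h14
              rw [norm_mul, h2P]
              calc (p:ℝ) * ‖y₃‖ ≤ (p:ℝ) * (p:ℝ)⁻¹ :=
                mul_le_mul_of_nonneg_left hy3 (le_of_lt pR_pos)
              _ = 1 := mul_inv_cancel₀ (ne_of_gt pR_pos)
            rw [pind_pinv y₃, if_pos hy3, pind_pm y₃,
              if_pos (le_trans hy3 (le_trans pinv_le_one one_le_pR)), pind_one hd]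
            ring
          · rw [pind_pinv y₃, if_neg hy3]
            by_cases hy3p : ‖y₃‖ ≤ (p:ℝ)
            swap
            · rw [pind_pm y₃, if_neg hy3p]; ring
            have h23 : 1 < ‖y₂*y₃‖ := by
              rw [norm_mul, h2P]
              have := not_le.mp hy3
              calc (1:ℝ) = (p:ℝ) * (p:ℝ)⁻¹ := (mul_inv_cancel₀ (ne_of_gt pR_pos)).symm
              _ < (p:ℝ) * ‖y₃‖ := mul_lt_mul_of_pos_left this pR_pos
            have hdn : ¬ ‖y₁*y₄ - y₂*y₃‖ ≤ 1 := by
              rw [det_eq_right (lt_of_le_of_lt h14 h23)]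
              exact not_le.mpr h23
            rw [pind_zero hdn]; ring
        linear_combination hk
      · -- case C2
        have h4u : ‖y₄‖ = 1 := eq_one_norm h4i h41
        rw [sum_pu y₁ y₂ y₃ y₄ h2P h4u]
        rw [pind_one h41, pind_pinv y₄, if_neg h4i]
        have hk : pind ((p:ℚ_[p])*y₁) * (pind y₃ * pind (y₁*y₄-y₂*y₃))
            = pind ((p:ℚ_[p])*y₁) * (pind ((p:ℚ_[p])*y₃) * pind (y₁*y₄-y₂*y₃)) := by
          by_cases hy1 : ‖y₁‖ ≤ (p:ℝ)
          swap
          · rw [pind_pm y₁, if_neg hy1]; ring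
          have h14 : ‖y₁*y₄‖ ≤ (p:ℝ) := by
            rw [norm_mul, h4u, mul_one]; exact hy1
          by_cases hy3 : ‖y₃‖ ≤ 1
          · rw [pind_one hy3, pind_pm y₃, if_pos (le_trans hy3 one_le_pR)]
          · rw [pind_zero hy3]
            by_cases hy3p : ‖y₃‖ ≤ (p:ℝ)
            swap
            · rw [pind_pm y₃, if_neg hy3p]
            have h23 : (p:ℝ) < ‖y₂*y₃‖ := by
              rw [norm_mul, h2P]
              calc (p:ℝ) = (p:ℝ) * 1 := (mul_one _).symm
              _ < (p:ℝ) * ‖y₃‖ := mul_lt_mul_of_pos_left (not_le.mp hy3) pR_pos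
            have hdn : ¬ ‖y₁*y₄ - y₂*y₃‖ ≤ 1 := by
              rw [det_eq_right (lt_of_le_of_lt h14 h23)]
              exact not_le.mpr (lt_of_le_of_lt one_le_pR h23)
            rw [pind_zero hdn]; ring
        linear_combination hk
    · -- case C3
      have h4P : ‖y₄‖ = (p:ℝ) := eq_p_norm h41 h4p
      have h4i : ¬ ‖y₄‖ ≤ (p:ℝ)⁻¹ := fun h => h41 (le_trans h pinv_le_one)
      rw [sum_pp y₁ y₂ y₃ y₄ h2P h4P]
      rw [pind_zero h41, pind_pinv y₄, if_neg h4i]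
      ring

end Stmt13Aux

theorem stmt13 (p : ℕ) [Fact p.Prime] (y₁ y₂ y₃ y₄ : ℚ_[p]) :
    pind ((p : ℚ_[p]) * y₂) * pind ((p : ℚ_[p]) * y₄) *
        ∑ a ∈ Finset.range (p ^ 2),
          pind ((p : ℚ_[p])⁻¹ * (y₁ + (a : ℚ_[p]) * y₂))
            * pind ((p : ℚ_[p])⁻¹ * (y₃ + (a : ℚ_[p]) * y₄))
      = brk (-1) (-1) (-1) (-1) y₁ y₂ y₃ y₄ * pind (y₁ * y₄ - y₂ * y₃)
          + (p : ℝ) * brk 0 0 0 0 y₁ y₂ y₃ y₄ * pind ((p : ℚ_[p])⁻¹ * (y₁ * y₄ - y₂ * y₃))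
          - brk (-1) 0 (-1) 0 y₁ y₂ y₃ y₄ * pind (y₁ * y₄ - y₂ * y₃)
          + (p : ℝ) ^ 2 * brk 1 1 1 1 y₁ y₂ y₃ y₄
          - (p : ℝ) * brk 0 1 0 1 y₁ y₂ y₃ y₄ := by
  rcases le_total ‖y₄‖ ‖y₂‖ with h | h
  · exact Stmt13Aux.main y₁ y₂ y₃ y₄ h
  · have hmain := Stmt13Aux.main y₃ y₄ y₁ y₂ h
    have hL : pind ((p : ℚ_[p]) * y₂) * pind ((p : ℚ_[p]) * y₄) *
        ∑ a ∈ Finset.range (p ^ 2),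
          pind ((p : ℚ_[p])⁻¹ * (y₁ + (a : ℚ_[p]) * y₂))
            * pind ((p : ℚ_[p])⁻¹ * (y₃ + (a : ℚ_[p]) * y₄))
        = pind ((p : ℚ_[p]) * y₄) * pind ((p : ℚ_[p]) * y₂) *
        ∑ a ∈ Finset.range (p ^ 2),
          pind ((p : ℚ_[p])⁻¹ * (y₃ + (a : ℚ_[p]) * y₄))
            * pind ((p : ℚ_[p])⁻¹ * (y₁ + (a : ℚ_[p]) * y₂)) := by
      rw [mul_comm (pind ((p : ℚ_[p]) * y₂)) (pind ((p : ℚ_[p]) * y₄))]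
      congr 1
      exact Finset.sum_congr rfl (fun a _ => mul_comm _ _)
    rw [hL, hmain]
    have hdet1 : y₃*y₂ - y₄*y₁ = -(y₁*y₄ - y₂*y₃) := by ring
    have e1 : pind (y₃*y₂ - y₄*y₁) = pind (y₁*y₄ - y₂*y₃) := by
      rw [hdet1, Stmt13Aux.pind_neg]
    have e2 : pind ((p:ℚ_[p])⁻¹ * (y₃*y₂ - y₄*y₁)) = pind ((p:ℚ_[p])⁻¹ * (y₁*y₄ - y₂*y₃)) := by
      rw [hdet1, mul_neg, Stmt13Aux.pind_neg]
    rw [e1, e2]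
    simp only [brk]
    ring
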